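/- arXiv:2012.00235 — 6 statements merged into one kernel-verified Lean document; each statement's English description precedes it below -/
import Mathlib

section
/- For any basic probability assignment m on the power set of a finite frame Θ, the fractal-based basic probability assignment m_F defined by m_F(F) = m(F)/(2^|F|-1) + Σ_{F ⊊ G} m(G)/(2^|G|-1) (sum over proper supersets G of F) sums to 1 over all nonempty subsets F of Θ. -/
open Finset Real Filter

/-- A basic probability assignment on the power set of a finite frame `Θ`. -/
noncomputable def IsBPA {Θ : Type*} [Fintype Θ] [DecidableEq Θ] (m : Finset Θ → ℝ) : Prop :=
  m ∅ = 0 ∧ (∀ F, 0 ≤ m F) ∧ ∑ F : Finset Θ, m F = 1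

/-- The fractal-based basic probability assignment:
`m_F(F) = m(F)/(2^|F|-1) + Σ_{F ⊊ G} m(G)/(2^|G|-1)`. -/
noncomputable def mF {Θ : Type*} [Fintype Θ] [DecidableEq Θ] (m : Finset Θ → ℝ) (F : Finset Θ) : ℝ :=
  m F / ((2 : ℝ) ^ F.card - 1) +
    ∑ G ∈ Finset.univ.filter (fun G : Finset Θ => F ⊂ G), m G / ((2 : ℝ) ^ G.card - 1)

/-- Fractal-based belief entropy: Shannon entropy of `m_F` over nonempty subsets. -/
noncomputable def EFB {Θ : Type*} [Fintype Θ] [DecidableEq Θ] (m : Finset Θ → ℝ) : ℝ :=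
  ∑ F ∈ Finset.univ.filter (fun F : Finset Θ => F.Nonempty), Real.negMulLog (mF m F)

/-- Pignistic probability transformation: `BetP(θ) = Σ_{θ ∈ F} m(F)/|F|`. -/
noncomputable def BetP {Θ : Type*} [Fintype Θ] [DecidableEq Θ] (m : Finset Θ → ℝ) (θ : Θ) : ℝ :=
  ∑ F ∈ Finset.univ.filter (fun F : Finset Θ => θ ∈ F), m F / (F.card : ℝ)

/-- Plausibility of a singleton: `Pl(θ) = Σ_{θ ∈ F} m(F)`. -/
noncomputable def Pl {Θ : Type*} [Fintype Θ] [DecidableEq Θ] (m : Finset Θ → ℝ) (θ : Θ) : ℝ :=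
  ∑ F ∈ Finset.univ.filter (fun F : Finset Θ => θ ∈ F), m F

theorem fbbpa_sum_one {Θ : Type*} [Fintype Θ] [DecidableEq Θ] [Nonempty Θ]
    (m : Finset Θ → ℝ) (hm : IsBPA m) :
    ∑ F ∈ Finset.univ.filter (fun F : Finset Θ => F.Nonempty), mF m F = 1 := by
  obtain ⟨h0, hpos, hsum⟩ := hm
  have key : ∀ F : Finset Θ, mF m F
      = ∑ G : Finset Θ, if F ⊆ G then m G / ((2:ℝ)^G.card - 1) else 0 := by
    intro F
    rw [mF, ← Finset.sum_filter]
    have hset : Finset.univ.filter (fun G : Finset Θ => F ⊆ G)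
        = insert F (Finset.univ.filter (fun G : Finset Θ => F ⊂ G)) := by
      ext G
      simp only [Finset.mem_filter, Finset.mem_univ, true_and, Finset.mem_insert]
      constructor
      · intro h
        rcases eq_or_ne G F with h' | h'
        · exact Or.inl h'
        · exact Or.inr ⟨h, fun hGF => h' (le_antisymm hGF h)⟩
      · rintro (rfl | h)
        · rfl
        · exact h.1
    rw [hset, Finset.sum_insert (by simp only [Finset.mem_filter]; exact fun h => h.2.2 h.2.1)]
  simp_rw [key]
  rw [Finset.sum_comm]
  have inner : ∀ G : Finset Θ,
      (∑ F ∈ Finset.univ.filter (fun F : Finset Θ => F.Nonempty),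
        if F ⊆ G then m G / ((2:ℝ)^G.card - 1) else 0) = m G := by
    intro G
    rw [← Finset.sum_filter, Finset.sum_const, nsmul_eq_mul]
    have hfil : (Finset.univ.filter (fun F : Finset Θ => F.Nonempty)).filter (· ⊆ G)
        = G.powerset.filter (fun F => F.Nonempty) := by
      ext F
      simp [Finset.mem_powerset, and_comm]
    have hcard : ((Finset.univ.filter (fun F : Finset Θ => F.Nonempty)).filter (· ⊆ G)).card
        = 2 ^ G.card - 1 := by
      rw [hfil]
      have : G.powerset.filter (fun F => F.Nonempty) = G.powerset.erase ∅ := by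
        ext F
        simp [Finset.nonempty_iff_ne_empty, and_comm]
      rw [this, Finset.card_erase_of_mem (by simp), Finset.card_powerset]
    rw [hcard]
    rcases G.eq_empty_or_nonempty with rfl | hG
    · simp [h0]
    · have h1 : (1:ℝ) < (2:ℝ) ^ G.card := by
        have : 0 < G.card := Finset.card_pos.mpr hG
        exact one_lt_pow₀ (by norm_num) (by omega)
      have hne : ((2:ℝ)^G.card - 1) ≠ 0 := by linarith
      have hcast : ((2 ^ G.card - 1 : ℕ) : ℝ) = (2:ℝ)^G.card - 1 := by
        push_cast [Nat.one_le_two_pow]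
        ring
      rw [hcast]
      field_simp
  simp_rw [inner]
  exact hsum
end

section
/- For any basic probability assignment m, the fractal-based BPA satisfies m_F(F) ≥ 0 for all nonempty F, so (m_F(F))_{∅≠F⊆Θ} is a probability distribution on the nonempty subsets of Θ. -/
open Finset Real Filter

theorem fbbpa_isProbability {Θ : Type*} [Fintype Θ] [DecidableEq Θ] [Nonempty Θ]
    (m : Finset Θ → ℝ) (hm : IsBPA m) :
    (∀ F : Finset Θ, F.Nonempty → 0 ≤ mF m F) ∧
      ∑ F ∈ Finset.univ.filter (fun F : Finset Θ => F.Nonempty), mF m F = 1 := by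
  obtain ⟨h0, hpos, hsum⟩ := hm
  have hden : ∀ G : Finset Θ, G.Nonempty → (0:ℝ) < 2 ^ G.card - 1 := by
    intro G hG
    have h1 : 1 ≤ G.card := Finset.card_pos.mpr hG
    have : (2:ℝ) ^ 1 ≤ 2 ^ G.card := pow_le_pow_right₀ (by norm_num) h1
    simp at this; linarith
  constructor
  · intro F hF
    apply add_nonneg
    · exact div_nonneg (hpos F) (hden F hF).le
    · apply Finset.sum_nonneg
      intro G hG
      simp only [Finset.mem_filter] at hG
      exact div_nonneg (hpos G) (hden G (hF.mono hG.2.subset)).le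
  · have key : ∀ F : Finset Θ, mF m F =
        ∑ G ∈ Finset.univ.filter (fun G : Finset Θ => F ⊆ G), m G / ((2:ℝ) ^ G.card - 1) := by
      intro F
      have hset : Finset.univ.filter (fun G : Finset Θ => F ⊆ G)
          = insert F (Finset.univ.filter (fun G : Finset Θ => F ⊂ G)) := by
        ext G
        simp only [Finset.mem_filter, Finset.mem_univ, true_and, Finset.mem_insert]
        constructor
        · intro h
          rcases eq_or_ne G F with rfl | hne
          · exact Or.inl rfl
          · exact Or.inr (lt_of_le_of_ne h (Ne.symm hne))
        · rintro (rfl | h)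
          · exact Finset.Subset.refl _
          · exact h.subset
      rw [hset, Finset.sum_insert (by simp [ssubset_irrefl])]
      rfl
    have hcount : ∀ G : Finset Θ,
        ((Finset.univ.filter (fun F : Finset Θ => F.Nonempty)).filter
          (fun F => F ⊆ G)).card = 2 ^ G.card - 1 := by
      intro G
      have : (Finset.univ.filter (fun F : Finset Θ => F.Nonempty)).filter (fun F => F ⊆ G)
          = G.powerset.erase ∅ := by
        ext F
        simp [Finset.mem_erase, Finset.mem_powerset, Finset.nonempty_iff_ne_empty, and_comm]
      rw [this, Finset.card_erase_of_mem (by simp), Finset.card_powerset]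
    calc ∑ F ∈ Finset.univ.filter (fun F : Finset Θ => F.Nonempty), mF m F
        = ∑ F ∈ Finset.univ.filter (fun F : Finset Θ => F.Nonempty),
            ∑ G : Finset Θ, if F ⊆ G then m G / ((2:ℝ) ^ G.card - 1) else 0 := by
          refine Finset.sum_congr rfl fun F _ => ?_
          rw [key F, Finset.sum_filter]
      _ = ∑ G : Finset Θ, ∑ F ∈ Finset.univ.filter (fun F : Finset Θ => F.Nonempty),
            (if F ⊆ G then m G / ((2:ℝ) ^ G.card - 1) else 0) := Finset.sum_comm
      _ = ∑ G : Finset Θ, (((Finset.univ.filter (fun F : Finset Θ => F.Nonempty)).filter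
            (fun F => F ⊆ G)).card : ℝ) * (m G / ((2:ℝ) ^ G.card - 1)) := by
          refine Finset.sum_congr rfl fun G _ => ?_
          rw [← Finset.sum_filter, Finset.sum_const, nsmul_eq_mul]
      _ = ∑ G : Finset Θ, m G := by
          refine Finset.sum_congr rfl fun G _ => ?_
          rw [hcount G]
          rcases G.eq_empty_or_nonempty with rfl | hG
          · simp [h0]
          · have hd := hden G hG
            have h1 : 1 ≤ 2 ^ G.card := Nat.one_le_two_pow
            rw [Nat.cast_sub h1]
            push_cast
            field_simp
      _ = 1 := hsum
end

section
/- The fractal-based belief entropy E_FB(m) = -Σ_{∅≠F⊆Θ} m_F(F) log m_F(F) is maximized, over all BPAs m on an n-element frame Θ, uniquely by the vacuous BPA m(Θ) = 1, and the maximum value is log(2^n - 1). -/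
open Finset Real Filter

/-- Gibbs-type termwise inequality with equality characterization. -/
lemma gibbs_term (N p : ℝ) (hN : 0 < N) (hp : 0 ≤ p) :
    Real.negMulLog p ≤ p * Real.log N + (1 / N - p) ∧
      (Real.negMulLog p = p * Real.log N + (1 / N - p) ↔ p = 1 / N) := by
  rcases eq_or_lt_of_le hp with h0 | h0
  · subst h0
    constructor
    · simp [Real.negMulLog]; positivity
    · simp only [Real.negMulLog, neg_zero, zero_mul, zero_sub, sub_zero]
      constructor
      · intro h
        exfalso
        have : (0:ℝ) < 1 / N := by positivity
        simp at h; linarith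
      · intro h
        exfalso
        have : (0:ℝ) < 1 / N := by positivity
        linarith
  · have hpN : 0 < p * N := mul_pos h0 hN
    have h1 : Real.negMulLog p = p * Real.log N + p * Real.log (1 / (p * N)) := by
      rw [Real.negMulLog, one_div, Real.log_inv, Real.log_mul h0.ne' hN.ne']
      ring
    have h2 : p * (1 / (p * N) - 1) = 1 / N - p := by
      field_simp
    constructor
    · have hle : Real.log (1 / (p * N)) ≤ 1 / (p * N) - 1 :=
        Real.log_le_sub_one_of_pos (by positivity)
      nlinarith [mul_le_mul_of_nonneg_left hle hp]
    · constructor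
      · intro h
        by_contra hne
        have hx : 1 / (p * N) ≠ 1 := by
          intro hx
          apply hne
          field_simp at hx ⊢
          linarith
        have hlt : Real.log (1 / (p * N)) < 1 / (p * N) - 1 :=
          Real.log_lt_sub_one_of_pos (by positivity) hx
        nlinarith [mul_lt_mul_of_pos_left hlt h0]
      · intro h
        subst h
        rw [h1]
        have : (1:ℝ) / ((1 / N) * N) = 1 := by field_simp
        rw [this, Real.log_one]
        ring

theorem EFB_max_iff_vacuous {Θ : Type*} [Fintype Θ] [DecidableEq Θ] [Nonempty Θ]
    (m : Finset Θ → ℝ) (hm : IsBPA m) :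
    EFB m ≤ Real.log ((2 : ℝ) ^ Fintype.card Θ - 1) ∧
      (EFB m = Real.log ((2 : ℝ) ^ Fintype.card Θ - 1) ↔ m Finset.univ = 1) := by
  obtain ⟨hm0, hmnn, hmsum⟩ := hm
  set n := Fintype.card Θ with hn
  set N : ℝ := (2:ℝ) ^ n - 1 with hNdef
  set s := Finset.univ.filter (fun F : Finset Θ => F.Nonempty) with hs
  have hnpos : 0 < n := Fintype.card_pos
  have hNpos : 0 < N := by
    have : (2:ℝ)^1 ≤ (2:ℝ)^n := pow_le_pow_right₀ one_le_two hnpos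
    simp only [hNdef]; nlinarith
  -- cardinality of s
  have hcard : ((s.card : ℝ)) = N := by
    have h1 : s = Finset.univ.erase (∅ : Finset Θ) := by
      ext F
      simp [hs, Finset.nonempty_iff_ne_empty]
    have h2 : s.card = 2 ^ n - 1 := by
      rw [h1, Finset.card_erase_of_mem (Finset.mem_univ _), Finset.card_univ,
        Fintype.card_finset]
    rw [h2, Nat.cast_sub (Nat.one_le_two_pow), Nat.cast_pow, Nat.cast_ofNat, Nat.cast_one]
  -- nonnegativity of mF
  have hden : ∀ G : Finset Θ, (0:ℝ) ≤ (2:ℝ) ^ G.card - 1 := by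
    intro G
    have : (1:ℝ) ≤ 2 ^ G.card := one_le_pow₀ one_le_two
    linarith
  have hmf_nonneg : ∀ F, 0 ≤ mF m F := by
    intro F
    refine add_nonneg (div_nonneg (hmnn F) (hden F)) (Finset.sum_nonneg fun G _ =>
      div_nonneg (hmnn G) (hden G))
  -- mF as a single sum
  have hstep : ∀ F : Finset Θ, mF m F =
      ∑ G ∈ Finset.univ.filter (fun G : Finset Θ => F ⊆ G), m G / ((2:ℝ) ^ G.card - 1) := by
    intro F
    have hins : Finset.univ.filter (fun G : Finset Θ => F ⊆ G) =
        insert F (Finset.univ.filter (fun G : Finset Θ => F ⊂ G)) := by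
      ext G
      simp only [Finset.mem_filter, Finset.mem_univ, true_and, Finset.mem_insert]
      constructor
      · intro h
        rcases eq_or_ne G F with h' | h'
        · exact Or.inl h'
        · exact Or.inr (Finset.ssubset_iff_subset_ne.mpr ⟨h, (Ne.symm h')⟩)
      · rintro (rfl | h)
        · exact Finset.Subset.refl _
        · exact h.subset
    rw [hins, Finset.sum_insert (by
      simp only [Finset.mem_filter, Finset.mem_univ, true_and]
      exact fun h => (ssubset_irrefl F) h)]
    rfl
  -- key: mF sums to 1 over nonempty sets
  have hsum : ∑ F ∈ s, mF m F = 1 := by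
    have hswap : ∑ F ∈ s, mF m F =
        ∑ G : Finset Θ, (m G / ((2:ℝ) ^ G.card - 1)) * ((s.filter (fun F => F ⊆ G)).card : ℝ) := by
      calc ∑ F ∈ s, mF m F
          = ∑ F ∈ s, ∑ G : Finset Θ, if F ⊆ G then m G / ((2:ℝ) ^ G.card - 1) else 0 := by
            refine Finset.sum_congr rfl fun F _ => ?_
            rw [hstep F, Finset.sum_filter]
        _ = ∑ G : Finset Θ, ∑ F ∈ s, if F ⊆ G then m G / ((2:ℝ) ^ G.card - 1) else 0 :=
            Finset.sum_comm
        _ = _ := by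
            refine Finset.sum_congr rfl fun G _ => ?_
            rw [← Finset.sum_filter, Finset.sum_const, nsmul_eq_mul, mul_comm]
    rw [hswap]
    have hcnt : ∀ G : Finset Θ, ((s.filter (fun F => F ⊆ G)).card : ℝ) = (2:ℝ) ^ G.card - 1 := by
      intro G
      have h1 : s.filter (fun F => F ⊆ G) = G.powerset.erase ∅ := by
        ext F
        simp [hs, Finset.mem_powerset, Finset.nonempty_iff_ne_empty, and_comm]
      rw [h1, Finset.card_erase_of_mem (by simp), Finset.card_powerset,
        Nat.cast_sub (Nat.one_le_two_pow), Nat.cast_pow, Nat.cast_ofNat, Nat.cast_one]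
    have : ∀ G : Finset Θ, (m G / ((2:ℝ) ^ G.card - 1)) * ((s.filter (fun F => F ⊆ G)).card : ℝ)
        = m G := by
      intro G
      rw [hcnt G]
      rcases G.eq_empty_or_nonempty with rfl | hG
      · simp [hm0]
      · have hGc : 0 < G.card := Finset.card_pos.mpr hG
        have : (2:ℝ)^1 ≤ (2:ℝ)^G.card := pow_le_pow_right₀ one_le_two hGc
        have hne : (2:ℝ) ^ G.card - 1 ≠ 0 := by nlinarith
        field_simp
    rw [Finset.sum_congr rfl fun G _ => this G]
    exact hmsum
  -- termwise Gibbs bound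
  have hterm : ∀ F ∈ s, Real.negMulLog (mF m F) ≤ mF m F * Real.log N + (1/N - mF m F) :=
    fun F _ => (gibbs_term N _ hNpos (hmf_nonneg F)).1
  have hboundsum : ∑ F ∈ s, (mF m F * Real.log N + (1/N - mF m F)) = Real.log N := by
    rw [Finset.sum_add_distrib, ← Finset.sum_mul, hsum, Finset.sum_sub_distrib, hsum,
      Finset.sum_const, nsmul_eq_mul, hcard]
    field_simp
    ring
  have hle : EFB m ≤ Real.log N := by
    calc EFB m ≤ ∑ F ∈ s, (mF m F * Real.log N + (1/N - mF m F)) :=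
          Finset.sum_le_sum hterm
      _ = Real.log N := hboundsum
  refine ⟨hle, ?_, ?_⟩
  · -- equality implies vacuous
    intro heq
    have hall := (Finset.sum_eq_sum_iff_of_le hterm).mp (by rw [hboundsum]; exact heq)
    have huniv_mem : (Finset.univ : Finset Θ) ∈ s := by
      simp [hs, Finset.univ_nonempty]
    have huniv := (gibbs_term N _ hNpos (hmf_nonneg Finset.univ)).2.mp (hall _ huniv_mem)
    have hempty : Finset.univ.filter (fun G : Finset Θ => Finset.univ ⊂ G) = ∅ := by
      ext G
      simp only [Finset.mem_filter, Finset.mem_univ, true_and, Finset.notMem_empty, iff_false]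
      exact fun h => h.not_subset (Finset.subset_univ G)
    rw [mF, hempty, Finset.sum_empty, add_zero, Finset.card_univ, ← hn] at huniv
    have hNne : N ≠ 0 := hNpos.ne'
    field_simp at huniv
    rwa [← hNdef, mul_div_assoc, div_self hNne, mul_one] at huniv
  · -- vacuous implies equality
    intro h1
    have hz : ∀ G : Finset Θ, G ≠ Finset.univ → m G = 0 := by
      have hsplit : m Finset.univ + ∑ G ∈ Finset.univ.erase Finset.univ, m G = 1 := by
        rw [Finset.add_sum_erase _ _ (Finset.mem_univ _)]
        exact hmsum
      have hz0 : ∑ G ∈ Finset.univ.erase Finset.univ, m G = 0 := by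
        rw [h1] at hsplit; linarith
      intro G hG
      have := (Finset.sum_eq_zero_iff_of_nonneg fun G _ => hmnn G).mp hz0
      exact this G (by simp [hG])
    have huni : ∀ F ∈ s, mF m F = 1 / N := by
      intro F hF
      rcases eq_or_ne F Finset.univ with rfl | hne
      · have hempty : Finset.univ.filter (fun G : Finset Θ => Finset.univ ⊂ G) = ∅ := by
          ext G
          simp only [Finset.mem_filter, Finset.mem_univ, true_and, Finset.notMem_empty, iff_false]
          exact fun h => h.not_subset (Finset.subset_univ G)
        rw [mF, hempty, Finset.sum_empty, add_zero, Finset.card_univ, ← hn, h1]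
      · rw [mF, hz F hne, zero_div, zero_add]
        rw [Finset.sum_eq_single_of_mem Finset.univ
          (by simp [Finset.ssubset_univ_iff.mpr hne])
          (fun G _ hG => by rw [hz G hG, zero_div])]
        rw [Finset.card_univ, ← hn, h1]
    have : EFB m = ∑ F ∈ s, Real.negMulLog (1 / N) :=
      Finset.sum_congr rfl fun F hF => by rw [huni F hF]
    rw [this, Finset.sum_const, nsmul_eq_mul, hcard, Real.negMulLog, one_div, Real.log_inv]
    field_simp
end

section
/- Iterating the uniform fractal splitting converges to the pignistic transformation: for the operator T with (Tm)(F) = m(F)/(2^|F|−1) + Σ_{F⊊G} m(G)/(2^|G|−1), for every nonempty F with |F| ≥ 2 the iterates satisfy (T^k m)(F) → 0 as k → ∞, and for every singleton {θ}, (T^k m)({θ}) → BetP(θ) = Σ_{F ∋ θ} m(F)/|F|. -/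
open Finset Real Filter

-- Step 1: sum over powerset of 1/(card+1)
lemma sum_powerset_inv_card_succ {α : Type*} [DecidableEq α] (s : Finset α) :
    ∑ t ∈ s.powerset, (1:ℝ)/(t.card+1) = ((2:ℝ)^(s.card+1)-1)/(s.card+1) := by
  rw [Finset.sum_powerset_apply_card (fun j => (1:ℝ)/(j+1))]
  have key : ∀ j ∈ Finset.range (s.card+1),
      (s.card.choose j) • ((1:ℝ)/(j+1)) = ((s.card+1).choose (j+1) : ℝ)/(s.card+1) := by
    intro j _
    have h := Nat.add_one_mul_choose_eq s.card j
    have h' : ((s.card+1) * s.card.choose j : ℝ) = ((s.card+1).choose (j+1)) * (j+1) := by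
      exact_mod_cast congrArg (Nat.cast : ℕ → ℝ) h
    rw [nsmul_eq_mul]
    field_simp
    linarith [h']
  rw [Finset.sum_congr rfl key, ← Finset.sum_div]
  congr 1
  have h2 : ∑ j ∈ Finset.range (s.card+2), ((s.card+1).choose j : ℝ) = 2^(s.card+1) := by
    exact_mod_cast congrArg (Nat.cast : ℕ → ℝ) (Nat.sum_range_choose (s.card+1))
  rw [Finset.sum_range_succ'] at h2
  simp at h2
  linarith

-- Step 2: reindex subsets containing θ
lemma sum_subsets_containing {α : Type*} [DecidableEq α] [Fintype α] (G : Finset α) (θ : α)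
    (hθ : θ ∈ G) (f : Finset α → ℝ) :
    ∑ F ∈ Finset.univ.filter (fun F => θ ∈ F ∧ F ⊆ G), f F
      = ∑ t ∈ (G.erase θ).powerset, f (insert θ t) := by
  refine Finset.sum_nbij' (fun F => F.erase θ) (fun t => insert θ t) ?_ ?_ ?_ ?_ ?_
  · intro F hF
    simp only [Finset.mem_filter, Finset.mem_univ, true_and] at hF
    rw [Finset.mem_powerset]
    exact Finset.erase_subset_erase θ hF.2
  · intro t ht
    rw [Finset.mem_powerset] at ht
    simp only [Finset.mem_filter, Finset.mem_univ, true_and]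
    refine ⟨Finset.mem_insert_self θ t, ?_⟩
    apply Finset.insert_subset hθ (ht.trans (Finset.erase_subset θ G))
  · intro F hF
    simp only [Finset.mem_filter, Finset.mem_univ, true_and] at hF
    exact Finset.insert_erase hF.1
  · intro t ht
    rw [Finset.mem_powerset] at ht
    exact Finset.erase_insert (fun h => (Finset.notMem_erase θ G) (ht h))
  · intro F hF
    simp only [Finset.mem_filter, Finset.mem_univ, true_and] at hF
    rw [Finset.insert_erase hF.1]

-- Step 3: the binomial identity
lemma sum_inv_card_subsets {α : Type*} [DecidableEq α] [Fintype α] (G : Finset α) (θ : α)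
    (hθ : θ ∈ G) :
    ∑ F ∈ Finset.univ.filter (fun F => θ ∈ F ∧ F ⊆ G), (1:ℝ)/F.card
      = ((2:ℝ)^G.card - 1)/G.card := by
  rw [sum_subsets_containing G θ hθ]
  have h1 : ∀ t ∈ (G.erase θ).powerset, (1:ℝ)/((insert θ t).card) = 1/(t.card+1) := by
    intro t ht
    rw [Finset.mem_powerset] at ht
    rw [Finset.card_insert_of_notMem (fun h => (Finset.notMem_erase θ G) (ht h))]
    push_cast; ring_nf
  rw [Finset.sum_congr rfl h1, sum_powerset_inv_card_succ]
  rw [Finset.card_erase_of_mem hθ]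
  have : 1 ≤ G.card := Finset.card_pos.mpr ⟨θ, hθ⟩
  have h2 : (G.card - 1 : ℕ) + 1 = G.card := Nat.succ_pred_eq_of_pos this
  rw [h2]
  have h3 : ((G.card - 1 : ℕ) : ℝ) + 1 = G.card := by exact_mod_cast congrArg (Nat.cast : ℕ → ℝ) h2
  rw [h3]

-- mF as a single sum over supersets
lemma mF_eq {Θ : Type*} [Fintype Θ] [DecidableEq Θ] (m : Finset Θ → ℝ) (F : Finset Θ) :
    mF m F = ∑ G ∈ Finset.univ.filter (fun G => F ⊆ G), m G / ((2:ℝ)^G.card - 1) := by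
  have hset : Finset.univ.filter (fun G : Finset Θ => F ⊆ G)
      = insert F (Finset.univ.filter (fun G => F ⊂ G)) := by
    ext G
    simp only [Finset.mem_filter, Finset.mem_univ, true_and, Finset.mem_insert]
    constructor
    · intro h
      rcases eq_or_ne G F with h'|h'
      · exact Or.inl h'
      · exact Or.inr (Finset.ssubset_iff_subset_ne.mpr ⟨h, fun e => h' e.symm⟩)
    · rintro (rfl|h)
      · exact Finset.Subset.refl _
      · exact h.subset
  rw [hset, Finset.sum_insert (by simp only [Finset.mem_filter]; exact fun h => h.2.2 h.2.1)]
  rfl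

lemma mF_nonneg {Θ : Type*} [Fintype Θ] [DecidableEq Θ] {m : Finset Θ → ℝ}
    (hm : ∀ F, 0 ≤ m F) (F : Finset Θ) : 0 ≤ mF m F := by
  rw [mF_eq]
  refine Finset.sum_nonneg fun G _ => div_nonneg (hm G) ?_
  simp [one_le_pow₀ (by norm_num : (1:ℝ) ≤ 2)]

lemma pow_sub_one_pos {n : ℕ} (hn : 1 ≤ n) : (0:ℝ) < 2^n - 1 := by
  have : (2:ℝ)^1 ≤ 2^n := pow_le_pow_right₀ (by norm_num) hn
  simp at this; linarith

-- BetP invariance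
lemma betP_mF {Θ : Type*} [Fintype Θ] [DecidableEq Θ] (m : Finset Θ → ℝ) (θ : Θ) :
    BetP (mF m) θ = BetP m θ := by
  unfold BetP
  have step1 : ∀ F ∈ Finset.univ.filter (fun F : Finset Θ => θ ∈ F),
      mF m F / F.card = ∑ G : Finset Θ, (if F ⊆ G then m G / ((2:ℝ)^G.card - 1) / F.card else 0) := by
    intro F _
    rw [mF_eq, ← Finset.sum_filter, Finset.sum_div]
  rw [Finset.sum_congr rfl step1, Finset.sum_filter]
  have push : ∀ a : Finset Θ,
      (if θ ∈ a then ∑ G : Finset Θ, (if a ⊆ G then m G / ((2:ℝ)^G.card - 1) / a.card else 0) else 0)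
      = ∑ G : Finset Θ, (if θ ∈ a then (if a ⊆ G then m G / ((2:ℝ)^G.card - 1) / a.card else 0) else 0) := by
    intro a; split <;> simp
  rw [Finset.sum_congr rfl (fun a _ => push a), Finset.sum_comm]
  rw [Finset.sum_filter]
  refine Finset.sum_congr rfl fun G _ => ?_
  have collapse : ∀ a : Finset Θ,
      (if θ ∈ a then (if a ⊆ G then m G / ((2:ℝ)^G.card - 1) / a.card else 0) else 0)
      = (if θ ∈ a ∧ a ⊆ G then m G / ((2:ℝ)^G.card - 1) / a.card else 0) := by
    intro a; by_cases h1 : θ ∈ a <;> by_cases h2 : a ⊆ G <;> simp [h1, h2]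
  rw [Finset.sum_congr rfl (fun a _ => collapse a), ← Finset.sum_filter]
  by_cases hθG : θ ∈ G
  · have h1 : 1 ≤ G.card := Finset.card_pos.mpr ⟨θ, hθG⟩
    have hpos := pow_sub_one_pos h1
    have : ∑ F ∈ Finset.univ.filter (fun F : Finset Θ => θ ∈ F ∧ F ⊆ G),
        m G / ((2:ℝ)^G.card - 1) / F.card
        = (m G / ((2:ℝ)^G.card - 1)) * ∑ F ∈ Finset.univ.filter (fun F : Finset Θ => θ ∈ F ∧ F ⊆ G),
            (1:ℝ)/F.card := by
      rw [Finset.mul_sum]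
      exact Finset.sum_congr rfl fun F _ => by ring
    rw [this, sum_inv_card_subsets G θ hθG, if_pos hθG]
    field_simp
  · have : Finset.univ.filter (fun F : Finset Θ => θ ∈ F ∧ F ⊆ G) = ∅ := by
      ext F; simp only [Finset.mem_filter, Finset.mem_univ, true_and, Finset.notMem_empty,
        iff_false, not_and]
      exact fun hF hFG => hθG (hFG hF)
    rw [this, if_neg hθG, Finset.sum_empty]

lemma count_le {Θ : Type*} [Fintype Θ] [DecidableEq Θ] (G : Finset Θ) :
    (Finset.univ.filter (fun F : Finset Θ => 2 ≤ F.card ∧ F ⊆ G)).card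
      ≤ 2 ^ G.card - (G.card + 1) := by
  set B : Finset (Finset Θ) := insert ∅ (G.image (fun a => {a})) with hB
  have hBsub : B ⊆ G.powerset := by
    intro t ht
    rw [hB, Finset.mem_insert] at ht
    rcases ht with rfl|ht
    · exact Finset.empty_mem_powerset G
    · obtain ⟨a, ha, rfl⟩ := Finset.mem_image.mp ht
      exact Finset.mem_powerset.mpr (Finset.singleton_subset_iff.mpr ha)
  have hBcard : B.card = G.card + 1 := by
    rw [hB, Finset.card_insert_of_notMem, Finset.card_image_of_injective _
      (fun a b h => Finset.singleton_inj.mp h)]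
    intro h
    obtain ⟨a, _, ha⟩ := Finset.mem_image.mp h
    exact Finset.singleton_ne_empty a ha
  have hsub : Finset.univ.filter (fun F : Finset Θ => 2 ≤ F.card ∧ F ⊆ G)
      ⊆ G.powerset \ B := by
    intro F hF
    simp only [Finset.mem_filter, Finset.mem_univ, true_and] at hF
    rw [Finset.mem_sdiff, Finset.mem_powerset]
    refine ⟨hF.2, ?_⟩
    rw [hB, Finset.mem_insert]
    rintro (rfl|h)
    · simp at hF
    · obtain ⟨a, _, rfl⟩ := Finset.mem_image.mp h
      simp at hF
  calc (Finset.univ.filter (fun F : Finset Θ => 2 ≤ F.card ∧ F ⊆ G)).card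
      ≤ (G.powerset \ B).card := Finset.card_le_card hsub
    _ = 2 ^ G.card - (G.card + 1) := by
        rw [Finset.card_sdiff_of_subset hBsub, Finset.card_powerset, hBcard]

lemma ratio_le {n N : ℕ} (hn : 2 ≤ n) (hnN : n ≤ N) :
    ((2 ^ n - (n + 1) : ℕ) : ℝ) / ((2:ℝ)^n - 1)
      ≤ 1 - 2 / ((2:ℝ)^N - 1) := by
  have hcast : ((2 ^ n - (n + 1) : ℕ) : ℝ) = (2:ℝ)^n - (n + 1) := by
    have h := Nat.lt_two_pow_self (n := n)
    push_cast [Nat.cast_sub (by omega : n + 1 ≤ 2 ^ n)]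
    ring
  rw [hcast]
  have ha : (4:ℝ) ≤ 2^n := by
    calc (4:ℝ) = 2^2 := by norm_num
    _ ≤ 2^n := pow_le_pow_right₀ (by norm_num) hn
  have hab : (2:ℝ)^n ≤ 2^N := pow_le_pow_right₀ (by norm_num) hnN
  have hapos : (0:ℝ) < 2^n - 1 := by linarith
  have hbpos : (0:ℝ) < 2^N - 1 := by linarith
  have hn' : (2:ℝ) ≤ n := by exact_mod_cast hn
  rw [div_le_iff₀ hapos]
  have key : 2 / ((2:ℝ)^N - 1) * ((2:ℝ)^n - 1) ≤ n := by
    rw [div_mul_eq_mul_div, div_le_iff₀ hbpos]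
    nlinarith
  nlinarith

lemma S_mF_le {Θ : Type*} [Fintype Θ] [DecidableEq Θ] (hN : 2 ≤ Fintype.card Θ)
    {m : Finset Θ → ℝ} (hm : ∀ F, 0 ≤ m F) :
    ∑ F ∈ Finset.univ.filter (fun F : Finset Θ => 2 ≤ F.card), mF m F
      ≤ (1 - 2/((2:ℝ)^(Fintype.card Θ) - 1))
          * ∑ F ∈ Finset.univ.filter (fun F : Finset Θ => 2 ≤ F.card), m F := by
  set r : ℝ := 1 - 2/((2:ℝ)^(Fintype.card Θ) - 1) with hr
  have step1 : ∀ F ∈ Finset.univ.filter (fun F : Finset Θ => 2 ≤ F.card),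
      mF m F = ∑ G : Finset Θ, (if F ⊆ G then m G / ((2:ℝ)^G.card - 1) else 0) := by
    intro F _
    rw [mF_eq, ← Finset.sum_filter]
  rw [Finset.sum_congr rfl step1, Finset.sum_filter]
  have push : ∀ a : Finset Θ,
      (if 2 ≤ a.card then ∑ G : Finset Θ, (if a ⊆ G then m G / ((2:ℝ)^G.card - 1) else 0) else 0)
      = ∑ G : Finset Θ, (if 2 ≤ a.card ∧ a ⊆ G then m G / ((2:ℝ)^G.card - 1) else 0) := by
    intro a
    by_cases h : 2 ≤ a.card
    · simp only [if_pos h]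
      exact Finset.sum_congr rfl fun G _ => by by_cases h2 : a ⊆ G <;> simp [h, h2]
    · simp [h]
  rw [Finset.sum_congr rfl (fun a _ => push a), Finset.sum_comm, Finset.mul_sum,
    Finset.sum_filter]
  refine Finset.sum_le_sum fun G _ => ?_
  rw [← Finset.sum_filter, Finset.sum_const, nsmul_eq_mul]
  by_cases hG : 2 ≤ G.card
  · have h1 : 1 ≤ G.card := by omega
    have hpos := pow_sub_one_pos h1
    rw [if_pos hG]
    have hcount : ((Finset.univ.filter (fun F : Finset Θ => 2 ≤ F.card ∧ F ⊆ G)).card : ℝ)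
        ≤ ((2 ^ G.card - (G.card + 1) : ℕ) : ℝ) := by
      exact_mod_cast count_le G
    have hratio := ratio_le hG (Finset.card_le_univ G)
    have : ((Finset.univ.filter (fun F : Finset Θ => 2 ≤ F.card ∧ F ⊆ G)).card : ℝ)
        / ((2:ℝ)^G.card - 1) ≤ r := by
      refine le_trans ?_ hratio
      exact div_le_div_of_nonneg_right hcount hpos.le |>.trans_eq rfl
    calc ((Finset.univ.filter (fun F : Finset Θ => 2 ≤ F.card ∧ F ⊆ G)).card : ℝ)
          * (m G / ((2:ℝ)^G.card - 1))
        = (((Finset.univ.filter (fun F : Finset Θ => 2 ≤ F.card ∧ F ⊆ G)).card : ℝ)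
            / ((2:ℝ)^G.card - 1)) * m G := by ring
      _ ≤ r * m G := mul_le_mul_of_nonneg_right this (hm G)
  · have hempty : Finset.univ.filter (fun F : Finset Θ => 2 ≤ F.card ∧ F ⊆ G) = ∅ := by
      ext F
      simp only [Finset.mem_filter, Finset.mem_univ, true_and, Finset.notMem_empty, iff_false,
        not_and]
      intro h2 hsub
      exact hG (le_trans h2 (Finset.card_le_card hsub))
    rw [if_neg hG, hempty]
    simp

theorem fractal_iterates_tendsto_pignistic {Θ : Type*} [Fintype Θ] [DecidableEq Θ] [Nonempty Θ]
    (m : Finset Θ → ℝ) (hm : IsBPA m) :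
    (∀ F : Finset Θ, 2 ≤ F.card →
        Filter.Tendsto (fun k => (mF^[k] m) F) Filter.atTop (nhds 0)) ∧
      (∀ θ : Θ, Filter.Tendsto (fun k => (mF^[k] m) {θ}) Filter.atTop (nhds (BetP m θ))) := by
  obtain ⟨hm0, hmnn, hmsum⟩ := hm
  have hnn : ∀ k (F : Finset Θ), 0 ≤ (mF^[k] m) F := by
    intro k
    induction k with
    | zero => simpa using hmnn
    | succ k ih =>
        intro F
        rw [Function.iterate_succ_apply']
        exact mF_nonneg ih F
  set Sf : (Finset Θ → ℝ) → ℝ :=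
    fun μ => ∑ F ∈ Finset.univ.filter (fun F : Finset Θ => 2 ≤ F.card), μ F with hSf
  have part1 : ∀ F : Finset Θ, 2 ≤ F.card →
      Filter.Tendsto (fun k => (mF^[k] m) F) Filter.atTop (nhds 0) := by
    intro F hF
    have hN : 2 ≤ Fintype.card Θ := le_trans hF (Finset.card_le_univ F)
    set r : ℝ := 1 - 2/((2:ℝ)^(Fintype.card Θ) - 1) with hr
    have h3 : (3:ℝ) ≤ (2:ℝ)^(Fintype.card Θ) - 1 := by
      have : (4:ℝ) ≤ 2^(Fintype.card Θ) := by
        calc (4:ℝ) = 2^2 := by norm_num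
        _ ≤ _ := pow_le_pow_right₀ (by norm_num) hN
      linarith
    have hr0 : 0 ≤ r := by
      have : 2/((2:ℝ)^(Fintype.card Θ) - 1) ≤ 2/3 := by
        apply div_le_div_of_nonneg_left (by norm_num) (by norm_num) h3
      rw [hr]; linarith
    have hr1 : r < 1 := by
      have : 0 < 2/((2:ℝ)^(Fintype.card Θ) - 1) := by positivity
      rw [hr]; linarith
    have hSk : ∀ k, Sf (mF^[k] m) ≤ r^k * Sf m := by
      intro k
      induction k with
      | zero => simp
      | succ k ih =>
          have step : Sf (mF^[k+1] m) ≤ r * Sf (mF^[k] m) := by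
            rw [Function.iterate_succ_apply']
            exact S_mF_le hN (hnn k)
          calc Sf (mF^[k+1] m) ≤ r * Sf (mF^[k] m) := step
            _ ≤ r * (r^k * Sf m) := mul_le_mul_of_nonneg_left ih hr0
            _ = r^(k+1) * Sf m := by ring
    have hbound : ∀ k, (mF^[k] m) F ≤ r^k * Sf m := by
      intro k
      refine le_trans ?_ (hSk k)
      exact Finset.single_le_sum (fun G _ => hnn k G)
        (Finset.mem_filter.mpr ⟨Finset.mem_univ F, hF⟩)
    have hlim : Filter.Tendsto (fun k => r^k * Sf m) Filter.atTop (nhds 0) := by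
      have := (tendsto_pow_atTop_nhds_zero_of_lt_one hr0 hr1).mul_const (Sf m)
      simpa using this
    exact squeeze_zero (fun k => hnn k F) hbound hlim
  refine ⟨part1, fun θ => ?_⟩
  have hBet : ∀ k, BetP (mF^[k] m) θ = BetP m θ := by
    intro k
    induction k with
    | zero => simp
    | succ k ih =>
        rw [Function.iterate_succ_apply', betP_mF, ih]
  have hsplit : ∀ μ : Finset Θ → ℝ,
      BetP μ θ = μ {θ}
        + ∑ F ∈ Finset.univ.filter (fun F : Finset Θ => θ ∈ F ∧ 2 ≤ F.card), μ F / F.card := by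
    intro μ
    unfold BetP
    have hset : Finset.univ.filter (fun F : Finset Θ => θ ∈ F)
        = insert {θ} (Finset.univ.filter (fun F : Finset Θ => θ ∈ F ∧ 2 ≤ F.card)) := by
      ext F
      simp only [Finset.mem_filter, Finset.mem_univ, true_and, Finset.mem_insert]
      constructor
      · intro h
        by_cases h2 : 2 ≤ F.card
        · exact Or.inr ⟨h, h2⟩
        · left
          have hc1 : F.card = 1 := by
            have := Finset.card_pos.mpr ⟨θ, h⟩
            omega
          obtain ⟨a, rfl⟩ := Finset.card_eq_one.mp hc1
          rw [Finset.mem_singleton] at h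
          rw [h]
      · rintro (rfl|⟨h, _⟩)
        · exact Finset.mem_singleton_self θ
        · exact h
    rw [hset, Finset.sum_insert (by simp)]
    simp
  have heq : ∀ k, (mF^[k] m) {θ} = BetP m θ
      - ∑ F ∈ Finset.univ.filter (fun F : Finset Θ => θ ∈ F ∧ 2 ≤ F.card),
          (mF^[k] m) F / F.card := by
    intro k
    have := hsplit (mF^[k] m)
    rw [hBet k] at this
    linarith
  have hlim : Filter.Tendsto (fun k => BetP m θ
      - ∑ F ∈ Finset.univ.filter (fun F : Finset Θ => θ ∈ F ∧ 2 ≤ F.card),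
          (mF^[k] m) F / F.card) Filter.atTop (nhds (BetP m θ)) := by
    have hsum : Filter.Tendsto (fun k =>
        ∑ F ∈ Finset.univ.filter (fun F : Finset Θ => θ ∈ F ∧ 2 ≤ F.card),
          (mF^[k] m) F / F.card) Filter.atTop (nhds 0) := by
      have : Filter.Tendsto (fun k =>
          ∑ F ∈ Finset.univ.filter (fun F : Finset Θ => θ ∈ F ∧ 2 ≤ F.card),
            (mF^[k] m) F / F.card) Filter.atTop
          (nhds (∑ F ∈ Finset.univ.filter (fun F : Finset Θ => θ ∈ F ∧ 2 ≤ F.card), (0:ℝ))) := by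
        refine tendsto_finset_sum _ fun F hF => ?_
        simp only [Finset.mem_filter, Finset.mem_univ, true_and] at hF
        have := (part1 F hF.2).div_const (F.card : ℝ)
        simpa using this
      simpa using this
    have := hsum.const_sub (BetP m θ)
    simpa using this
  exact hlim.congr fun k => (heq k).symm
end

section
/- The quantity Σ_{θ∈Θ} Σ_{F ∋ θ} (T^k m)(F)/|F| is invariant under T: each application of the fractal splitting operator preserves the pignistic probability of every element, i.e., BetP_{Tm}(θ) = BetP_m(θ) for all θ ∈ Θ. -/
open Finset Real Filter

private lemma choose_div_sum (n : ℕ) :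
    ∑ k ∈ Finset.range (n + 1), (n.choose k : ℝ) / (k + 1) =
      ((2 : ℝ) ^ (n + 1) - 1) / (n + 1) := by
  have hn : ((n : ℝ) + 1) ≠ 0 := by positivity
  rw [eq_div_iff hn, Finset.sum_mul]
  have hterm : ∀ k ∈ Finset.range (n + 1),
      (n.choose k : ℝ) / (k + 1) * ((n : ℝ) + 1) = ((n + 1).choose (k + 1) : ℝ) := by
    intro k _
    have h := Nat.add_one_mul_choose_eq n k
    have h' : ((n : ℝ) + 1) * (n.choose k : ℝ) = ((n + 1).choose (k + 1) : ℝ) * ((k : ℝ) + 1) := by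
      exact_mod_cast congrArg (Nat.cast : ℕ → ℝ) h
    have hk : ((k : ℝ) + 1) ≠ 0 := by positivity
    field_simp
    linarith
  rw [Finset.sum_congr rfl hterm]
  have h3 : ∑ j ∈ Finset.range (n + 2), ((n + 1).choose j : ℝ) = (2 : ℝ) ^ (n + 1) := by
    exact_mod_cast congrArg (Nat.cast : ℕ → ℝ) (Nat.sum_range_choose (n + 1))
  rw [Finset.sum_range_succ'] at h3
  simp only [Nat.choose_zero_right, Nat.cast_one] at h3
  linarith

private lemma sum_inv_card_powerset {Θ : Type*} [DecidableEq Θ] (G : Finset Θ) (θ : Θ)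
    (hθ : θ ∈ G) :
    ∑ F ∈ G.powerset.filter (fun F => θ ∈ F), (1 : ℝ) / F.card =
      ((2 : ℝ) ^ G.card - 1) / G.card := by
  have hbij : ∑ F ∈ G.powerset.filter (fun F => θ ∈ F), (1 : ℝ) / F.card =
      ∑ S ∈ (G.erase θ).powerset, (1 : ℝ) / (S.card + 1) := by
    refine Finset.sum_bij' (fun F _ => F.erase θ) (fun S _ => insert θ S) ?_ ?_ ?_ ?_ ?_
    · intro F hF
      simp only [Finset.mem_filter, Finset.mem_powerset] at hF ⊢
      exact Finset.erase_subset_erase θ hF.1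
    · intro S hS
      simp only [Finset.mem_powerset] at hS
      simp only [Finset.mem_filter, Finset.mem_powerset]
      refine ⟨Finset.insert_subset hθ (hS.trans (Finset.erase_subset θ G)), Finset.mem_insert_self θ S⟩
    · intro F hF
      simp only [Finset.mem_filter, Finset.mem_powerset] at hF
      exact Finset.insert_erase hF.2
    · intro S hS
      simp only [Finset.mem_powerset] at hS
      exact Finset.erase_insert (fun hcon => (Finset.notMem_erase θ G) (hS hcon))
    · intro F hF
      simp only [Finset.mem_filter, Finset.mem_powerset] at hF
      rw [Finset.card_erase_of_mem hF.2]
      have hc : 1 ≤ F.card := Finset.card_pos.mpr ⟨θ, hF.2⟩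
      have : ((F.card - 1 : ℕ) : ℝ) = (F.card : ℝ) - 1 := by
        push_cast [hc]; ring
      rw [this]; ring_nf
  rw [hbij, Finset.sum_powerset]
  have hcongr : ∀ j ∈ Finset.range ((G.erase θ).card + 1),
      ∑ S ∈ Finset.powersetCard j (G.erase θ), (1 : ℝ) / (S.card + 1) =
        ((G.erase θ).card.choose j : ℝ) / (j + 1) := by
    intro j hj
    rw [Finset.sum_congr rfl (fun S hS => by
      rw [(Finset.mem_powersetCard.mp hS).2]), Finset.sum_const, Finset.card_powersetCard,
      nsmul_eq_mul]
    ring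
  rw [Finset.sum_congr rfl hcongr, choose_div_sum]
  have hcard : (G.erase θ).card + 1 = G.card := by
    rw [Finset.card_erase_of_mem hθ]
    have : 1 ≤ G.card := Finset.card_pos.mpr ⟨θ, hθ⟩
    omega
  rw [← hcard]
  push_cast
  ring_nf

theorem betP_invariant_under_fractal_step {Θ : Type*} [Fintype Θ] [DecidableEq Θ] [Nonempty Θ]
    (m : Finset Θ → ℝ) (h0 : m ∅ = 0) (hnn : ∀ F : Finset Θ, F.Nonempty → 0 ≤ m F)
    (hsum : ∑ F ∈ Finset.univ.filter (fun F : Finset Θ => F.Nonempty), m F = 1) :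
    ∀ θ : Θ, BetP (mF m) θ = BetP m θ := by
  intro θ
  unfold BetP mF
  have step1 : ∀ F ∈ Finset.univ.filter (fun F : Finset Θ => θ ∈ F),
      (m F / ((2 : ℝ) ^ F.card - 1) +
        ∑ G ∈ Finset.univ.filter (fun G : Finset Θ => F ⊂ G), m G / ((2 : ℝ) ^ G.card - 1)) /
          (F.card : ℝ)
      = ∑ G ∈ Finset.univ.filter (fun G : Finset Θ => F ⊆ G),
          m G / ((2 : ℝ) ^ G.card - 1) / (F.card : ℝ) := by
    intro F _
    have hset : Finset.univ.filter (fun G : Finset Θ => F ⊆ G) =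
        insert F (Finset.univ.filter (fun G : Finset Θ => F ⊂ G)) := by
      ext G
      simp only [Finset.mem_filter, Finset.mem_univ, true_and, Finset.mem_insert]
      constructor
      · intro h
        rcases eq_or_ne G F with h' | h'
        · exact Or.inl h'
        · exact Or.inr (lt_of_le_of_ne h (Ne.symm h'))
      · rintro (h | h)
        · exact h.ge
        · exact le_of_lt h
    rw [hset, Finset.sum_insert (by
      simp only [Finset.mem_filter, Finset.mem_univ, true_and]
      exact lt_irrefl F), add_div, Finset.sum_div]
  rw [Finset.sum_congr rfl step1]
  rw [Finset.sum_comm' (t' := (Finset.univ : Finset (Finset Θ)))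
    (s' := fun G => Finset.univ.filter (fun F : Finset Θ => θ ∈ F ∧ F ⊆ G))
    (fun F G => by simp)]
  have step2 : ∀ G ∈ (Finset.univ : Finset (Finset Θ)),
      (∑ F ∈ Finset.univ.filter (fun F : Finset Θ => θ ∈ F ∧ F ⊆ G),
        m G / ((2 : ℝ) ^ G.card - 1) / (F.card : ℝ))
      = if θ ∈ G then m G / (G.card : ℝ) else 0 := by
    intro G _
    have hfe : Finset.univ.filter (fun F : Finset Θ => θ ∈ F ∧ F ⊆ G) =
        G.powerset.filter (fun F => θ ∈ F) := by
      ext F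
      simp only [Finset.mem_filter, Finset.mem_univ, true_and, Finset.mem_powerset]
      tauto
    rw [hfe]
    by_cases hθG : θ ∈ G
    · rw [if_pos hθG]
      have : ∀ F ∈ G.powerset.filter (fun F => θ ∈ F),
          m G / ((2 : ℝ) ^ G.card - 1) / (F.card : ℝ)
          = m G / ((2 : ℝ) ^ G.card - 1) * ((1 : ℝ) / (F.card : ℝ)) := by
        intro F _; ring
      rw [Finset.sum_congr rfl this, ← Finset.mul_sum, sum_inv_card_powerset G θ hθG]
      have hc : 1 ≤ G.card := Finset.card_pos.mpr ⟨θ, hθG⟩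
      have hne : (2 : ℝ) ^ G.card - 1 ≠ 0 := by
        have : (2 : ℝ) ^ 1 ≤ (2 : ℝ) ^ G.card :=
          pow_le_pow_right₀ (by norm_num) hc
        simp only [pow_one] at this
        linarith
      field_simp
    · rw [if_neg hθG]
      have : G.powerset.filter (fun F => θ ∈ F) = ∅ := by
        ext F
        simp only [Finset.mem_filter, Finset.mem_powerset, Finset.notMem_empty, iff_false]
        rintro ⟨hFG, hθF⟩
        exact hθG (hFG hθF)
      rw [this, Finset.sum_empty]
  rw [Finset.sum_congr rfl step2, ← Finset.sum_filter]
end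

section
/- Monotonicity under vacuous extension direction (special case): on a 2-element frame {a,b}, FB entropy of the BPA m_t = {m(a) = (1−t)/2, m(b) = (1−t)/2, m(ab) = t} is strictly increasing in t on [0,1], rising from log 2 at t = 0 to log 3 at t = 1. -/
open Finset Real Filter

/-- The family of BPAs `m_t` on the 2-element frame with
`m_t({a}) = m_t({b}) = (1-t)/2` and `m_t({a,b}) = t`. -/
noncomputable def mT (t : ℝ) : Finset (Fin 2) → ℝ := fun F =>
  if F = {0} then (1 - t) / 2
  else if F = {1} then (1 - t) / 2
  else if F = Finset.univ then t
  else 0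


private lemma mF0 (t : ℝ) : mF (mT t) {0} = (3 - t) / 6 := by
  rw [mF, show (Finset.univ.filter (fun G : Finset (Fin 2) => ({0}:Finset (Fin 2)) ⊂ G)) = {Finset.univ} from by decide]
  simp [mT, show (Finset.univ : Finset (Fin 2)) ≠ {0} from by decide,
    show (Finset.univ : Finset (Fin 2)) ≠ {1} from by decide,
    show ((1:Fin 2) ≠ 0) from by decide]
  ring

private lemma mF1 (t : ℝ) : mF (mT t) {1} = (3 - t) / 6 := by
  rw [mF, show (Finset.univ.filter (fun G : Finset (Fin 2) => ({1}:Finset (Fin 2)) ⊂ G)) = {Finset.univ} from by decide]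
  simp [mT, show (Finset.univ : Finset (Fin 2)) ≠ {0} from by decide,
    show (Finset.univ : Finset (Fin 2)) ≠ {1} from by decide,
    show (({1}:Finset (Fin 2)) ≠ {0}) from by decide]
  ring

private lemma mFu (t : ℝ) : mF (mT t) Finset.univ = t / 3 := by
  rw [mF, show (Finset.univ.filter (fun G : Finset (Fin 2) => (Finset.univ:Finset (Fin 2)) ⊂ G)) = ∅ from by decide]
  simp [mT, show (Finset.univ : Finset (Fin 2)) ≠ {0} from by decide,
    show (Finset.univ : Finset (Fin 2)) ≠ {1} from by decide,
    show (Finset.univ : Finset (Fin 2)).card = 2 from by decide]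
  ring

private lemma EFB_mT_eq (t : ℝ) :
    EFB (mT t) = 2 * negMulLog ((3 - t)/6) + negMulLog (t/3) := by
  rw [EFB, show (Finset.univ.filter (fun F : Finset (Fin 2) => F.Nonempty)) = {{0},{1},Finset.univ} from by decide]
  rw [show ({{0},{1},Finset.univ} : Finset (Finset (Fin 2))) = insert {0} (insert {1} {Finset.univ}) from rfl]
  rw [Finset.sum_insert (by decide), Finset.sum_insert (by decide), Finset.sum_singleton,
    mF0, mF1, mFu]
  ring

private lemma myDeriv (t : ℝ) (ht : t ∈ Set.Ioo (0:ℝ) 1) :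
    HasDerivAt (fun t => 2 * negMulLog ((3 - t)/6) + negMulLog (t/3))
      ((1/3) * (log ((3 - t)/6) - log (t/3))) t := by
  obtain ⟨h0, h1⟩ := ht
  have hx : ((3 - t)/6 : ℝ) ≠ 0 := by nlinarith
  have hy : (t/3 : ℝ) ≠ 0 := by positivity
  have d1 : HasDerivAt (fun t : ℝ => (3 - t)/6) (-1/6) t := by
    simpa using ((hasDerivAt_const t (3:ℝ)).sub (hasDerivAt_id t)).div_const 6
  have d2 : HasDerivAt (fun t : ℝ => t/3) (1/3) t := by
    simpa using (hasDerivAt_id t).div_const 3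
  have h1' := ((hasDerivAt_negMulLog hx).comp t d1).const_mul 2
  have h2' := (hasDerivAt_negMulLog hy).comp t d2
  exact (h1'.add h2').congr_deriv (by ring)

private lemma fmono :
    StrictMonoOn (fun t => 2 * negMulLog ((3 - t)/6) + negMulLog (t/3)) (Set.Icc (0:ℝ) 1) := by
  apply strictMonoOn_of_deriv_pos (convex_Icc 0 1)
  · fun_prop
  · intro t ht
    rw [interior_Icc] at ht
    rw [(myDeriv t ht).deriv]
    have h0 := ht.1
    have h1 := ht.2
    have : log (t/3) < log ((3 - t)/6) := by
      apply Real.log_lt_log (by positivity)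
      nlinarith
    nlinarith

theorem EFB_mT_strictMono :
    StrictMonoOn (fun t => EFB (mT t)) (Set.Icc (0 : ℝ) 1) ∧
      EFB (mT 0) = Real.log 2 ∧ EFB (mT 1) = Real.log 3 := by
  refine ⟨?_, ?_, ?_⟩
  · intro a ha b hb hab
    simp only [EFB_mT_eq]
    exact fmono ha hb hab
  · rw [EFB_mT_eq]
    norm_num [Real.negMulLog, Real.log_div, Real.log_inv]
    ring
  · rw [EFB_mT_eq]
    norm_num [Real.negMulLog, Real.log_div, Real.log_inv]
    ring
end
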